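/- Let Ω be the set of ordinals ≤ ω₁ with τ₁ the order topology and τ₂ the discrete topology. Then the subspace Ω₀ = Ω \ {ω₁} = [0, ω₁) is not 12-weakly Lindelöf, i.e., there is a τ₁-open cover of Ω₀ admitting no countable subfamily whose union is τ₂-dense in Ω₀; consequently the ij-weakly Lindelöf property is not hereditary. -/

import Mathlib

open Set Ordinal Topology

/-- `X` with topologies `t1`, `t2` is ij-weakly Lindelöf. -/
def IjWeaklyLindelof {X : Type*} (t1 t2 : TopologicalSpace X) : Prop :=
  ∀ {ι : Type} (U : ι → Set X), (∀ a, IsOpen[t1] (U a)) → (⋃ a, U a) = Set.univ →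
    ∃ s : Set ι, s.Countable ∧ @closure X t2 (⋃ a ∈ s, U a) = Set.univ

/-- The set of ordinals `≤ ω₁`. -/
abbrev Omega : Type _ := {o : Ordinal // o ≤ ω_ 1}

/-- `Ω₀ = Ω \ {ω₁} = [0, ω₁)`. -/
def Omega0 : Set Omega := {x : Omega | (x : Ordinal) ≠ ω_ 1}

/-- The order topology on `Ω`. -/
noncomputable def tau1 : TopologicalSpace Omega := Preorder.topology Omega

/-- The discrete topology on `Ω`. -/
def tau2 : TopologicalSpace Omega := ⊥

/-- In the induced discrete topology, every set is closed, so closure is the identity. -/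
lemma closure_eq_self (A : Set Omega0) :
    @closure Omega0 (tau2.induced (Subtype.val : Omega0 → Omega)) A = A := by
  letI : TopologicalSpace Omega0 := tau2.induced (Subtype.val : Omega0 → Omega)
  have h : IsClosed A :=
    ⟨⟨Subtype.val '' Aᶜ, trivial, by rw [Set.preimage_image_eq _ Subtype.val_injective]⟩⟩
  exact h.closure_eq

-- `ω₁` in a higher universe is the lift of `ω₁` from universe 0.
lemma lift_omega1 : Ordinal.lift.{u, 0} (ω_ 1) = ω_ 1 := by
  rw [Ordinal.lift_omega, Ordinal.lift_one]

theorem stmt17 :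
    ¬ IjWeaklyLindelof (tau1.induced (Subtype.val : Omega0 → Omega))
        (tau2.induced (Subtype.val : Omega0 → Omega)) := by
  intro h
  have hlim0 : Order.IsSuccLimit (ω_ 1 : Ordinal.{0}) := Cardinal.isSuccLimit_omega 1
  let e := Ordinal.ToType.mk (o := (ω_ 1 : Ordinal.{0}))
  let b : (ω_ 1 : Ordinal.{0}).ToType → Ordinal := fun i =>
    Ordinal.lift.{_, 0} (e.symm i).val
  have hb : ∀ i, b i < ω_ 1 := fun i => by
    have := (e.symm i).2
    calc b i < Ordinal.lift.{_, 0} (ω_ 1) := Ordinal.lift_lt.2 this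
    _ = ω_ 1 := lift_omega1
  let U : (ω_ 1 : Ordinal.{0}).ToType → Set Omega0 := fun i => {x | (x.val.val : Ordinal) < b i}
  have hopen : ∀ i, IsOpen[tau1.induced (Subtype.val : Omega0 → Omega)] (U i) := by
    intro i
    refine ⟨{y : Omega | y < ⟨b i, (hb i).le⟩}, ?_, rfl⟩
    exact TopologicalSpace.GenerateOpen.basic _ ⟨⟨b i, (hb i).le⟩, Or.inr rfl⟩
  have hcover : (⋃ i, U i) = Set.univ := by
    ext x
    simp only [Set.mem_iUnion, Set.mem_univ, iff_true]
    have hx : (x.val.val : Ordinal) < ω_ 1 := lt_of_le_of_ne x.val.2 x.2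
    have hxle : (x.val.val : Ordinal) ≤ Ordinal.lift.{_, 0} (ω_ 1) := by
      rw [lift_omega1]; exact hx.le
    obtain ⟨y, hy⟩ := Ordinal.mem_range_lift_of_le hxle
    have hy1 : (y : Ordinal.{0}) < ω_ 1 := by
      rw [← hy, ← lift_omega1] at hx
      exact Ordinal.lift_lt.1 hx
    have hs : y + 1 < (ω_ 1 : Ordinal.{0}) := by rw [Ordinal.add_one_eq_succ]; exact hlim0.succ_lt hy1
    refine ⟨e ⟨y + 1, hs⟩, ?_⟩
    show (x.val.val : Ordinal) < b (e ⟨y + 1, hs⟩)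
    have hbe : b (e ⟨y + 1, hs⟩) = Ordinal.lift.{_, 0} (y + 1) := by
      show Ordinal.lift.{_, 0} (e.symm (e ⟨y + 1, hs⟩)).val = _
      rw [e.symm_apply_apply]
    rw [hbe, ← hy]
    exact Ordinal.lift_lt.2 (lt_add_one y)
  obtain ⟨s, hsc, hsd⟩ := @h ((ω_ 1 : Ordinal.{0}).ToType) U hopen hcover
  rw [closure_eq_self] at hsd
  have hsup0 : (⨆ i : s, b i) < (Cardinal.aleph 1).ord := by
    apply Cardinal.iSup_lt_ord_lift_of_isRegular Cardinal.isRegular_aleph_one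
    · calc Cardinal.lift.{_, 0} (Cardinal.mk s) ≤ Cardinal.lift.{_, 0} Cardinal.aleph0 :=
            Cardinal.lift_le.2 hsc.le_aleph0
        _ = Cardinal.aleph0 := Cardinal.lift_aleph0
        _ < Cardinal.aleph 1 := Cardinal.aleph0_lt_aleph_one
    · intro i; rw [Cardinal.ord_aleph]; exact hb i
  have hsup : (⨆ i : s, b i) < ω_ 1 := lt_of_lt_of_le hsup0 (Cardinal.ord_aleph 1).le
  let x : Omega0 := ⟨⟨⨆ i : s, b i, hsup.le⟩, hsup.ne⟩
  have hx : x ∈ ⋃ a ∈ s, U a := hsd ▸ Set.mem_univ x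
  obtain ⟨i, hi, hxi⟩ := by simpa using hx
  exact absurd (Ordinal.le_iSup (fun i : s => b i) ⟨i, hi⟩) (not_le.2 hxi)
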